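/- The robustness of entanglement is invariant under local unitaries: for any density matrix ρ on ℂ^{dA} ⊗ ℂ^{dB} and any unitary matrices U_A (dA×dA) and U_B (dB×dB), E((U_A ⊗ U_B) ρ (U_A ⊗ U_B)ᴴ) = E(ρ). -/

import Mathlib

open Matrix Complex Kronecker
open scoped ComplexOrder

noncomputable section

/-- A density matrix: positive semidefinite with trace 1. -/
def IsDensityMatrix {d : Type*} [Fintype d] (ρ : Matrix d d ℂ) : Prop :=
  ρ.PosSemidef ∧ ρ.trace = 1

/-- A separable state on a bipartite system: a finite convex combination of Kronecker
products of density matrices. -/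
def SeparableState {dA dB : Type*} [Fintype dA] [Fintype dB]
    (ρ : Matrix (dA × dB) (dA × dB) ℂ) : Prop :=
  ∃ (n : ℕ) (p : Fin n → ℝ) (σ : Fin n → Matrix dA dA ℂ) (τ : Fin n → Matrix dB dB ℂ),
    (∀ k, 0 ≤ p k) ∧ (∑ k, p k) = 1 ∧
    (∀ k, IsDensityMatrix (σ k)) ∧ (∀ k, IsDensityMatrix (τ k)) ∧
    ρ = ∑ k, (p k : ℂ) • ((σ k) ⊗ₖ (τ k))

/-- The robustness of entanglement. -/
def robustness {dA dB : Type*} [Fintype dA] [Fintype dB]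
    (ρ : Matrix (dA × dB) (dA × dB) ℂ) : ℝ :=
  sInf { t : ℝ | 0 ≤ t ∧ ∃ σ : Matrix (dA × dB) (dA × dB) ℂ,
    SeparableState σ ∧ SeparableState (((1 + t : ℝ) : ℂ)⁻¹ • (ρ + (t : ℂ) • σ)) }

/-- γ(ρ): optimal one-norm of a quasiprobability decomposition into separable states. -/
def gammaSep {dA dB : Type*} [Fintype dA] [Fintype dB]
    (ρ : Matrix (dA × dB) (dA × dB) ℂ) : ℝ :=
  sInf { c : ℝ | ∃ (ap am : ℝ) (ρp ρm : Matrix (dA × dB) (dA × dB) ℂ),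
    0 ≤ ap ∧ 0 ≤ am ∧ SeparableState ρp ∧ SeparableState ρm ∧
    ρ = (ap : ℂ) • ρp - (am : ℂ) • ρm ∧ c = ap + am }

lemma conjTranspose_kron {dA dB : Type*} (A : Matrix dA dA ℂ) (B : Matrix dB dB ℂ) :
    (A ⊗ₖ B)ᴴ = Aᴴ ⊗ₖ Bᴴ := by
  ext ⟨i,j⟩ ⟨k,l⟩
  simp [conjTranspose_apply, kroneckerMap_apply]

lemma density_conj {d : Type*} [Fintype d] [DecidableEq d] {U ρ : Matrix d d ℂ}
    (hU : U ∈ Matrix.unitaryGroup d ℂ) (hρ : IsDensityMatrix ρ) :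
    IsDensityMatrix (U * ρ * Uᴴ) := by
  constructor
  · exact hρ.1.mul_mul_conjTranspose_same U
  · rw [trace_mul_cycle]
    have : Uᴴ * U = 1 := hU.1
    rw [this, Matrix.one_mul, hρ.2]

lemma sep_conj {dA dB : Type*} [Fintype dA] [Fintype dB] [DecidableEq dA] [DecidableEq dB]
    {UA : Matrix dA dA ℂ} (hUA : UA ∈ Matrix.unitaryGroup dA ℂ)
    {UB : Matrix dB dB ℂ} (hUB : UB ∈ Matrix.unitaryGroup dB ℂ)
    {σ : Matrix (dA × dB) (dA × dB) ℂ} (hσ : SeparableState σ) :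
    SeparableState ((UA ⊗ₖ UB) * σ * (UA ⊗ₖ UB)ᴴ) := by
  obtain ⟨n, p, s, t, hp, hp1, hs, ht, rfl⟩ := hσ
  refine ⟨n, p, fun k => UA * s k * UAᴴ, fun k => UB * t k * UBᴴ, hp, hp1,
    fun k => density_conj hUA (hs k), fun k => density_conj hUB (ht k), ?_⟩
  rw [Finset.mul_sum, Finset.sum_mul]
  refine Finset.sum_congr rfl fun k _ => ?_
  rw [Matrix.mul_smul, Matrix.smul_mul, conjTranspose_kron,
    ← mul_kronecker_mul, ← mul_kronecker_mul]

lemma kron_unitary {dA dB : Type*} [Fintype dA] [Fintype dB] [DecidableEq dA] [DecidableEq dB]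
    {UA : Matrix dA dA ℂ} (hUA : UA ∈ Matrix.unitaryGroup dA ℂ)
    {UB : Matrix dB dB ℂ} (hUB : UB ∈ Matrix.unitaryGroup dB ℂ) :
    (UA ⊗ₖ UB) ∈ Matrix.unitaryGroup (dA × dB) ℂ := by
  rw [Matrix.mem_unitaryGroup_iff, Matrix.star_eq_conjTranspose, conjTranspose_kron,
    ← mul_kronecker_mul]
  have h1 : UA * UAᴴ = 1 := hUA.2
  have h2 : UB * UBᴴ = 1 := hUB.2
  rw [h1, h2, one_kronecker_one]

lemma conjTranspose_mem_unitary {d : Type*} [Fintype d] [DecidableEq d]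
    {U : Matrix d d ℂ} (hU : U ∈ Matrix.unitaryGroup d ℂ) :
    Uᴴ ∈ Matrix.unitaryGroup d ℂ := by
  rw [← Matrix.star_eq_conjTranspose]; exact Unitary.star_mem hU

lemma conj_smul_add {d : Type*} [Fintype d] (U : Matrix d d ℂ) (c t : ℂ)
    (ρ σ : Matrix d d ℂ) :
    U * (c • (ρ + t • σ)) * Uᴴ = c • (U * ρ * Uᴴ + t • (U * σ * Uᴴ)) := by
  rw [Matrix.mul_smul, Matrix.smul_mul, Matrix.mul_add, Matrix.add_mul, Matrix.mul_smul,
    Matrix.smul_mul]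


/-- Singular values of a complex matrix: square roots of eigenvalues of `Mᴴ * M`. -/
def singularValues {m n : Type*} [Fintype m] [Fintype n] [DecidableEq n]
    (M : Matrix m n ℂ) : n → ℝ :=
  fun i => Real.sqrt ((Matrix.isHermitian_conjTranspose_mul_self M).eigenvalues i)

theorem robustness_local_unitary_invariance {dA dB : ℕ}
    (ρ : Matrix (Fin dA × Fin dB) (Fin dA × Fin dB) ℂ) (hρ : IsDensityMatrix ρ)
    (UA : Matrix (Fin dA) (Fin dA) ℂ) (hUA : UA ∈ Matrix.unitaryGroup (Fin dA) ℂ)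
    (UB : Matrix (Fin dB) (Fin dB) ℂ) (hUB : UB ∈ Matrix.unitaryGroup (Fin dB) ℂ) :
    robustness ((UA ⊗ₖ UB) * ρ * (UA ⊗ₖ UB)ᴴ) = robustness ρ := by
  have hW := kron_unitary hUA hUB
  set W := UA ⊗ₖ UB with hWdef
  have hWW : W * Wᴴ = 1 := hW.2
  have hWW' : Wᴴ * W = 1 := hW.1
  have key : ∀ σ : Matrix (Fin dA × Fin dB) (Fin dA × Fin dB) ℂ,
      SeparableState σ → SeparableState (W * σ * Wᴴ) := by
    intro σ hσ
    rw [hWdef]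
    exact sep_conj hUA hUB hσ
  have key' : ∀ σ : Matrix (Fin dA × Fin dB) (Fin dA × Fin dB) ℂ,
      SeparableState σ → SeparableState (Wᴴ * σ * W) := by
    intro σ hσ
    have := sep_conj (conjTranspose_mem_unitary hUA) (conjTranspose_mem_unitary hUB) hσ
    rw [← conjTranspose_kron, conjTranspose_conjTranspose, ← hWdef] at this
    exact this
  unfold robustness
  congr 1
  ext t
  simp only [Set.mem_setOf_eq]
  constructor
  · rintro ⟨ht, σ, hσ, hmix⟩
    refine ⟨ht, Wᴴ * σ * W, key' σ hσ, ?_⟩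
    have h2 := key' _ hmix
    rw [show ∀ M : Matrix (Fin dA × Fin dB) (Fin dA × Fin dB) ℂ, Wᴴ * M * W = Wᴴ * M * (Wᴴ)ᴴ
      from fun M => by rw [conjTranspose_conjTranspose]] at h2
    rw [conj_smul_add] at h2
    rw [conjTranspose_conjTranspose] at h2
    rw [show Wᴴ * (W * ρ * Wᴴ) * W = ρ by
      rw [Matrix.mul_assoc W ρ, ← Matrix.mul_assoc, hWW', Matrix.one_mul, Matrix.mul_assoc,
        hWW', Matrix.mul_one]] at h2
    exact h2
  · rintro ⟨ht, σ, hσ, hmix⟩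
    refine ⟨ht, W * σ * Wᴴ, key σ hσ, ?_⟩
    have h2 := key _ hmix
    rw [conj_smul_add] at h2
    exact h2
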